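/- Let S be a monoid acting on an R-algebra A by algebra endomorphisms, with skew semigroup ring A*S. The R-module of S-invariant elements (A*S)^S is a cyclic right ideal of A*S, generated (if non-zero) by 1*t where t = Σ_{x∈I} x and I is a left ideal of S which is a finite group. Consequently Hom_{A*S}(A, A*S) ≠ 0 if and only if S contains a left ideal which is a finite group; and if S is left cancellative then this holds if and only if S is a finite group. -/

import Mathlib

open scoped Classical


universe u v w

/-- `I` is a (finite, non-empty) left ideal of the monoid `S` which is a group. -/
def IsFiniteGroupLeftIdeal {S : Type v} [Monoid S] (I : Finset S) : Prop :=
  I.Nonempty ∧ (∀ s : S, ∀ x ∈ I, s * x ∈ I) ∧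
    ∃ e ∈ I, (∀ x ∈ I, e * x = x ∧ x * e = x) ∧ ∀ x ∈ I, ∃ y ∈ I, x * y = e ∧ y * x = e

section Skew

variable (S : Type v) (A : Type w) [Monoid S] [Ring A] [MulSemiringAction S A]

/-- Left multiplication by `1 * s` in the skew semigroup ring `A * S` (elements of which are
represented as finitely supported functions `S →₀ A`, `γ = Σ aₓ * x`):
`(1*s)(Σ aₓ * x) = Σ aₓˢ * (s x)`. -/
noncomputable def skewLeftMul (s : S) (γ : S →₀ A) : S →₀ A :=
  γ.sum fun x a => Finsupp.single (s * x) (s • a)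

/-- An element of the skew semigroup ring `A * S` is `S`-invariant if `(1*s)·γ = γ` for all
`s ∈ S`. -/
def IsSkewInvariant (γ : S →₀ A) : Prop := ∀ s : S, skewLeftMul S A s γ = γ

end Skew

section Aux

variable {S : Type v} {A : Type w} [Monoid S] [Ring A] [MulSemiringAction S A]

lemma skewLeftMul_single (s x : S) (a : A) :
    skewLeftMul S A s (Finsupp.single x a) = Finsupp.single (s * x) (s • a) := by
  classical
  simp [skewLeftMul, Finsupp.sum_single_index]

lemma skewLeftMul_zero (s : S) : skewLeftMul S A s 0 = 0 := by
  simp [skewLeftMul]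

lemma skewLeftMul_add (s : S) (γ δ : S →₀ A) :
    skewLeftMul S A s (γ + δ) = skewLeftMul S A s γ + skewLeftMul S A s δ := by
  classical
  exact Finsupp.sum_add_index' (by simp) (by intro x b c; simp [smul_add, Finsupp.single_add])

lemma skewLeftMul_sub (s : S) (γ δ : S →₀ A) :
    skewLeftMul S A s (γ - δ) = skewLeftMul S A s γ - skewLeftMul S A s δ := by
  have h := skewLeftMul_add s (γ - δ) δ
  rw [sub_add_cancel] at h
  rw [h]; abel

lemma skewLeftMul_sum {ι : Type*} (s : S) (t : Finset ι) (f : ι → (S →₀ A)) :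
    skewLeftMul S A s (∑ i ∈ t, f i) = ∑ i ∈ t, skewLeftMul S A s (f i) := by
  classical
  induction t using Finset.induction with
  | empty => simp [skewLeftMul_zero]
  | insert _ _ h ih => rw [Finset.sum_insert h, skewLeftMul_add, ih, Finset.sum_insert h]

lemma skewLeftMul_skewLeftMul (s t : S) (γ : S →₀ A) :
    skewLeftMul S A s (skewLeftMul S A t γ) = skewLeftMul S A (s * t) γ := by
  classical
  induction γ using Finsupp.induction with
  | zero => simp [skewLeftMul_zero]
  | single_add x a γ _ _ ih =>
      simp only [skewLeftMul_add, skewLeftMul_single, ih, mul_assoc, mul_smul]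

lemma skewLeftMul_apply (s : S) (γ : S →₀ A) (w : S) :
    skewLeftMul S A s γ w = ∑ x ∈ γ.support, if s * x = w then s • γ x else 0 := by
  classical
  rw [skewLeftMul, Finsupp.sum_apply, Finsupp.sum]
  exact Finset.sum_congr rfl fun x _ => by rw [Finsupp.single_apply]

lemma support_skewLeftMul (s : S) (γ : S →₀ A) :
    (skewLeftMul S A s γ).support ⊆ γ.support.image (s * ·) := by
  classical
  refine (Finsupp.support_sum).trans ?_
  intro w hw
  rw [Finset.mem_biUnion] at hw
  obtain ⟨x, hx, hw⟩ := hw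
  have := Finsupp.support_single_subset hw
  rw [Finset.mem_singleton] at this
  exact Finset.mem_image.2 ⟨x, hx, this.symm⟩

lemma invariant_T (hId : ∀ s : S, ∀ x ∈ I, s * x ∈ I) (heI : e ∈ I)
    (he : ∀ x ∈ I, e * x = x ∧ x * e = x)
    (hinv : ∀ x ∈ I, ∃ y ∈ I, x * y = e ∧ y * x = e) (γ' : S →₀ A) :
    IsSkewInvariant S A (∑ z ∈ I, skewLeftMul S A z γ') := by
  intro s
  rw [skewLeftMul_sum]
  simp only [skewLeftMul_skewLeftMul]
  obtain ⟨u, huI, hu1, hu2⟩ := hinv (s * e) (hId s e heI)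
  refine Finset.sum_nbij' (fun z => (s * e) * z) (fun z => u * z) ?_ ?_ ?_ ?_ ?_
  · exact fun z hz => hId _ _ hz
  · exact fun z hz => hId _ _ hz
  · intro z hz
    show u * (s * e * z) = z
    rw [← mul_assoc, hu2, (he z hz).1]
  · intro z hz
    show s * e * (u * z) = z
    rw [← mul_assoc, hu1, (he z hz).1]
  · intro z hz
    have h : s * z = s * e * z := by
      conv_lhs => rw [← (he z hz).1, ← mul_assoc]
    rw [h]

lemma invariant_rep (hId : ∀ s : S, ∀ x ∈ I, s * x ∈ I) (heI : e ∈ I)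
    (he : ∀ x ∈ I, e * x = x ∧ x * e = x)
    (hinv : ∀ x ∈ I, ∃ y ∈ I, x * y = e ∧ y * x = e) :
    ∀ n : ℕ, ∀ γ : S →₀ A, γ.support.card ≤ n → IsSkewInvariant S A γ →
      ∃ γ' : S →₀ A, γ = ∑ z ∈ I, skewLeftMul S A z γ' := by
  have hfree : ∀ z ∈ I, ∀ x : S, z * x = x → z = e := by
    intro z hz x hx
    obtain ⟨w', hw'I, hw1, hw2⟩ := hinv (x * e) (hId x e heI)
    have h1 : z * (x * e) = x * e := by rw [← mul_assoc, hx]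
    calc z = z * e := ((he z hz).2).symm
    _ = z * ((x * e) * w') := by rw [hw1]
    _ = (z * (x * e)) * w' := (mul_assoc ..).symm
    _ = (x * e) * w' := by rw [h1]
    _ = e := hw1
  intro n
  induction n with
  | zero =>
    intro γ hcard _
    have h0 : γ = 0 := by
      rw [← Finsupp.support_eq_empty, ← Finset.card_eq_zero]
      omega
    exact ⟨0, by simp [h0, skewLeftMul_zero]⟩
  | succ n ih =>
    intro γ hcard hγ
    by_cases h0 : γ = 0
    · exact ⟨0, by simp [h0, skewLeftMul_zero]⟩
    have hsupfix : ∀ y ∈ γ.support, e * y = y := by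
      intro y hy
      have h1 : γ.support ⊆ γ.support.image (e * ·) := by
        conv_lhs => rw [← hγ e]
        exact support_skewLeftMul e γ
      obtain ⟨x, hx, hxy⟩ := Finset.mem_image.1 (h1 hy)
      rw [← hxy, ← mul_assoc, (he e heI).1]
    have hinjx : ∀ z ∈ I, ∀ x y : S, e * x = x → e * y = y → z * x = z * y → x = y := by
      intro z hz x y hx hy hxy
      obtain ⟨z', hz'I, hz1, hz2⟩ := hinv z hz
      calc x = e * x := hx.symm
      _ = (z' * z) * x := by rw [hz2]
      _ = z' * (z * x) := mul_assoc ..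
      _ = z' * (z * y) := by rw [hxy]
      _ = (z' * z) * y := (mul_assoc ..).symm
      _ = e * y := by rw [hz2]
      _ = y := hy
    have hcoef : ∀ z ∈ I, ∀ y ∈ γ.support, γ (z * y) = z • γ y := by
      intro z hz y hy
      have h1 : skewLeftMul S A z γ (z * y) = γ (z * y) := by rw [hγ z]
      rw [skewLeftMul_apply] at h1
      rw [← h1]
      have h2 : ∀ x ∈ γ.support,
          (if z * x = z * y then z • γ x else 0) = (if x = y then z • γ x else 0) := by
        intro x hx
        refine if_congr ⟨fun h => hinjx z hz x y (hsupfix x hx) (hsupfix y hy) h,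
          fun h => by rw [h]⟩ rfl rfl
      rw [Finset.sum_congr rfl h2, Finset.sum_ite_eq' γ.support y (fun x => z • γ x),
        if_pos hy]
    obtain ⟨y, hy⟩ : γ.support.Nonempty := Finsupp.support_nonempty_iff.2 h0
    set c := γ y with hc
    set δ : S →₀ A := ∑ z ∈ I, skewLeftMul S A z (Finsupp.single y c) with hδdef
    have hδinv : IsSkewInvariant S A δ := invariant_T hId heI he hinv _
    have hδapply : ∀ w : S, δ w = ∑ z ∈ I, if z * y = w then z • c else 0 := by
      intro w
      rw [hδdef, Finsupp.finset_sum_apply]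
      exact Finset.sum_congr rfl fun z _ => by
        rw [skewLeftMul_single, Finsupp.single_apply]
    have hzinj : ∀ z ∈ I, ∀ z₀ ∈ I, z * y = z₀ * y → z = z₀ := by
      intro z hz z₀ hz₀ hzy
      obtain ⟨z₀', hz₀'I, h1, h2⟩ := hinv z₀ hz₀
      have h3 : (z₀' * z) * y = y := by
        rw [mul_assoc, hzy, ← mul_assoc, h2, hsupfix y hy]
      have h4 : z₀' * z = e := hfree _ (hId z₀' z hz) _ h3
      calc z = e * z := ((he z hz).1).symm
      _ = (z₀ * z₀') * z := by rw [h1]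
      _ = z₀ * (z₀' * z) := mul_assoc ..
      _ = z₀ * e := by rw [h4]
      _ = z₀ := (he z₀ hz₀).2
    have hδat : ∀ z₀ ∈ I, δ (z₀ * y) = z₀ • c := by
      intro z₀ hz₀
      rw [hδapply]
      have h2 : ∀ z ∈ I, (if z * y = z₀ * y then z • c else 0)
          = (if z = z₀ then z • c else 0) := by
        intro z hz
        refine if_congr ⟨fun h => hzinj z hz z₀ hz₀ h, fun h => by rw [h]⟩ rfl rfl
      rw [Finset.sum_congr rfl h2, Finset.sum_ite_eq' I z₀ (fun z => z • c), if_pos hz₀]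
    have hδout : ∀ w : S, (∀ z ∈ I, z * y ≠ w) → δ w = 0 := by
      intro w hw
      rw [hδapply]
      exact Finset.sum_eq_zero fun z hz => if_neg (hw z hz)
    set γnew : S →₀ A := γ - δ with hγnewdef
    have hγnewinv : IsSkewInvariant S A γnew := by
      intro s
      rw [hγnewdef, skewLeftMul_sub, hγ s, hδinv s]
    have hsupp : γnew.support ⊆ γ.support.erase y := by
      intro w hw
      rw [Finsupp.mem_support_iff] at hw
      have hval : γnew w = γ w - δ w := by rw [hγnewdef, Finsupp.sub_apply]
      by_cases hcase : ∃ z ∈ I, z * y = w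
      · obtain ⟨z, hz, hzw⟩ := hcase
        exact absurd (by rw [hval, ← hzw, hδat z hz, hcoef z hz y hy, sub_self]) hw
      · push_neg at hcase
        have hwne : w ≠ y := by
          intro h
          exact hcase e heI (by rw [hsupfix y hy, h])
        rw [hval, hδout w hcase, sub_zero] at hw
        exact Finset.mem_erase.2 ⟨hwne, Finsupp.mem_support_iff.2 hw⟩
    have hcard' : γnew.support.card ≤ n := by
      have h1 := Finset.card_erase_of_mem hy
      have h2 := Finset.card_le_card hsupp
      have h3 : 1 ≤ γ.support.card := Finset.card_pos.2 ⟨y, hy⟩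
      omega
    obtain ⟨γ'', hγ''⟩ := ih γnew hcard' hγnewinv
    refine ⟨γ'' + Finsupp.single y c, ?_⟩
    have hsplit : γ = γnew + δ := by rw [hγnewdef, sub_add_cancel]
    rw [hsplit, hγ'', hδdef, ← Finset.sum_add_distrib]
    exact Finset.sum_congr rfl fun z _ => (skewLeftMul_add ..).symm

lemma exists_ideal_of_invariant (γ : S →₀ A) (h0 : γ ≠ 0) (hγ : IsSkewInvariant S A γ) :
    ∃ I : Finset S, IsFiniteGroupLeftIdeal I := by
  classical
  set F := γ.support with hF
  have himg : ∀ s : S, F.image (s * ·) = F := by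
    intro s
    have hsub : F ⊆ F.image (s * ·) := by
      conv_lhs => rw [hF, ← hγ s]
      exact support_skewLeftMul s γ
    exact (Finset.eq_of_subset_of_card_le hsub Finset.card_image_le).symm
  have hclosed : ∀ s : S, ∀ x ∈ F, s * x ∈ F := by
    intro s x hx
    rw [← himg s]
    exact Finset.mem_image_of_mem _ hx
  have hinj : ∀ s : S, Set.InjOn (s * ·) ↑F := by
    intro s
    apply Finset.injOn_of_card_image_eq
    rw [himg s]
  obtain ⟨x₀, hx₀⟩ : F.Nonempty := Finsupp.support_nonempty_iff.2 h0
  have hpow : ∀ k : ℕ, x₀ ^ (k + 1) ∈ F := by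
    intro k
    induction k with
    | zero => simpa using hx₀
    | succ k ih => rw [pow_succ]; exact hclosed _ _ hx₀
  obtain ⟨a, b, hab, heq⟩ :=
    Finite.exists_ne_map_eq_of_infinite (fun k : ℕ => (⟨x₀ ^ (k + 1), hpow k⟩ : F))
  have heq' : x₀ ^ (a + 1) = x₀ ^ (b + 1) := by simpa using heq
  -- wlog a < b
  obtain ⟨i, j, hi1, hij, hije⟩ : ∃ i j : ℕ, 1 ≤ i ∧ i < j ∧ x₀ ^ i = x₀ ^ j := by
    rcases Nat.lt_or_ge a b with h | h
    · exact ⟨a + 1, b + 1, by omega, by omega, heq'⟩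
    · have hba : b < a := by omega
      exact ⟨b + 1, a + 1, by omega, by omega, heq'.symm⟩
  set d := j - i with hd
  have hd1 : 1 ≤ d := by omega
  have hstep : ∀ k : ℕ, i ≤ k → x₀ ^ k = x₀ ^ (k + d) := by
    intro k hk
    have h1 : x₀ ^ k = x₀ ^ (k - i) * x₀ ^ i := by rw [← pow_add]; congr 1; omega
    rw [h1, hije, ← pow_add]
    congr 1
    omega
  have hmult : ∀ t : ℕ, ∀ k : ℕ, i ≤ k → x₀ ^ k = x₀ ^ (k + t * d) := by
    intro t
    induction t with
    | zero => intro k _; simp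
    | succ t ih =>
      intro k hk
      calc x₀ ^ k = x₀ ^ (k + t * d) := ih k hk
      _ = x₀ ^ (k + t * d + d) := hstep _ (by omega)
      _ = x₀ ^ (k + (t + 1) * d) := by congr 1; ring
  set e := x₀ ^ (i * d) with he
  have hiid : i ≤ i * d := Nat.le_mul_of_pos_right i (by omega)
  have hee : e * e = e := by
    rw [he, ← pow_add]
    exact (hmult i (i * d) hiid).symm
  have heF : e ∈ F := by
    have h1 := hpow (i * d - 1)
    have h2 : i * d - 1 + 1 = i * d := by
      have : 1 ≤ i * d := by
        calc 1 ≤ i := hi1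
        _ ≤ i * d := hiid
      omega
    rwa [h2] at h1
  set I : Finset S := F.filter (fun w => ∃ s : S, s * e = w) with hI
  have heI : e ∈ I := Finset.mem_filter.2 ⟨heF, 1, one_mul e⟩
  have hId : ∀ s : S, ∀ x ∈ I, s * x ∈ I := by
    intro s x hx
    obtain ⟨hxF, t, ht⟩ := Finset.mem_filter.1 hx
    exact Finset.mem_filter.2 ⟨hclosed s x hxF, s * t, by rw [mul_assoc, ht]⟩
  have hre : ∀ x ∈ I, x * e = x := by
    intro x hx
    obtain ⟨hxF, t, ht⟩ := Finset.mem_filter.1 hx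
    rw [← ht, mul_assoc, hee]
  have hle : ∀ x ∈ I, e * x = x := by
    intro x hx
    have hxF := (Finset.mem_filter.1 hx).1
    have h1 : e * (e * x) = e * x := by rw [← mul_assoc, hee]
    exact hinj e (Finset.mem_coe.2 (hclosed e x hxF)) (Finset.mem_coe.2 hxF) h1
  have hIsubF : ↑I ⊆ (↑F : Set S) := by
    intro x hx
    exact Finset.mem_coe.2 ((Finset.mem_filter.1 (Finset.mem_coe.1 hx)).1)
  have hright : ∀ x ∈ I, ∃ y ∈ I, x * y = e := by
    intro x hx
    have hmaps : ∀ z ∈ I, x * z ∈ I := fun z hz => hId x z hz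
    have himgI : I.image (x * ·) = I := by
      refine Finset.eq_of_subset_of_card_le ?_ ?_
      · intro w hw
        obtain ⟨z, hz, hzw⟩ := Finset.mem_image.1 hw
        exact hzw ▸ hmaps z hz
      · rw [Finset.card_image_of_injOn (((hinj x).mono) hIsubF)]
    have : e ∈ I.image (x * ·) := by rw [himgI]; exact heI
    obtain ⟨y, hy, hxy⟩ := Finset.mem_image.1 this
    exact ⟨y, hy, hxy⟩
  have hinvI : ∀ x ∈ I, ∃ y ∈ I, x * y = e ∧ y * x = e := by
    intro x hx
    obtain ⟨y, hyI, hxy⟩ := hright x hx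
    obtain ⟨w, hwI, hyw⟩ := hright y hyI
    refine ⟨y, hyI, hxy, ?_⟩
    calc y * x = (y * x) * e := (hre _ (hId y x hx)).symm
    _ = (y * x) * (y * w) := by rw [hyw]
    _ = ((y * x) * y) * w := (mul_assoc ..).symm
    _ = (y * (x * y)) * w := by rw [mul_assoc y x y]
    _ = (y * e) * w := by rw [hxy]
    _ = y * w := by rw [hre y hyI]
    _ = e := hyw
  exact ⟨I, ⟨e, heI⟩, hId, e, heI, fun x hx => ⟨hle x hx, hre x hx⟩, hinvI⟩

lemma exists_invariant_of_ideal [Nontrivial A] {I : Finset S}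
    (hI : IsFiniteGroupLeftIdeal I) :
    ∃ γ : S →₀ A, γ ≠ 0 ∧ IsSkewInvariant S A γ := by
  classical
  obtain ⟨hne, hId, e, heI, he, hinv⟩ := hI
  refine ⟨∑ z ∈ I, skewLeftMul S A z (Finsupp.single e (1 : A)), ?_,
    invariant_T hId heI he hinv _⟩
  have hform : (∑ z ∈ I, skewLeftMul S A z (Finsupp.single e (1 : A)))
      = ∑ z ∈ I, Finsupp.single z (1 : A) := by
    refine Finset.sum_congr rfl fun z hz => ?_
    rw [skewLeftMul_single, (he z hz).2, smul_one]
  have happ : (∑ z ∈ I, skewLeftMul S A z (Finsupp.single e (1 : A))) e = 1 := by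
    rw [hform, Finsupp.finset_sum_apply]
    have h2 : ∀ z ∈ I, (Finsupp.single z (1 : A)) e = if z = e then (1 : A) else 0 :=
      fun z _ => Finsupp.single_apply
    rw [Finset.sum_congr rfl h2, Finset.sum_ite_eq' I e (fun _ => (1 : A)), if_pos heI]
  intro h
  rw [h] at happ
  simp at happ

end Aux

/-- For a monoid `S` acting on an `R`-algebra `A` by endomorphisms, the `S`-invariant elements
of the skew semigroup ring `A*S` form a cyclic right ideal generated by `1*t` with
`t = Σ_{x ∈ I} x` for `I` a left ideal of `S` which is a finite group: invariant elements are
exactly the products `(1*t)·γ'`.  Consequently `Hom_{A*S}(A, A*S) ≠ 0` (equivalently, a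
non-zero invariant element exists) iff `S` contains a left ideal which is a finite group, and
for `S` left cancellative iff `S` is a finite group. -/
theorem skew_semigroup_ring_invariants (R : Type u) (S : Type v) (A : Type w) [CommRing R]
    [Monoid S] [Ring A] [Algebra R A] [MulSemiringAction S A] [Nontrivial A] :
    (∀ I : Finset S, IsFiniteGroupLeftIdeal I →
      ∀ γ : S →₀ A, IsSkewInvariant S A γ ↔
        ∃ γ' : S →₀ A, γ = ∑ z ∈ I, skewLeftMul S A z γ') ∧
    ((∃ γ : S →₀ A, γ ≠ 0 ∧ IsSkewInvariant S A γ) ↔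
      ∃ I : Finset S, IsFiniteGroupLeftIdeal I) ∧
    ((∀ a b c : S, a * b = a * c → b = c) →
      ((∃ γ : S →₀ A, γ ≠ 0 ∧ IsSkewInvariant S A γ) ↔
        (Finite S ∧ ∀ s : S, ∃ y : S, s * y = 1 ∧ y * s = 1))) := by
  classical
  have part2fwd : (∃ γ : S →₀ A, γ ≠ 0 ∧ IsSkewInvariant S A γ) →
      ∃ I : Finset S, IsFiniteGroupLeftIdeal I := by
    rintro ⟨γ, h0, hγ⟩
    exact exists_ideal_of_invariant γ h0 hγ
  refine ⟨?_, ⟨part2fwd, ?_⟩, ?_⟩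
  · intro I hI γ
    obtain ⟨hne, hId, e, heI, he, hinv⟩ := hI
    constructor
    · intro hγ
      exact invariant_rep hId heI he hinv γ.support.card γ le_rfl hγ
    · rintro ⟨γ', rfl⟩
      exact invariant_T hId heI he hinv γ'
  · rintro ⟨I, hI⟩
    exact exists_invariant_of_ideal hI
  · intro hcancel
    constructor
    · intro hex
      obtain ⟨I, hne, hId, e, heI, he, hinv⟩ := part2fwd hex
      have he1 : e = 1 := hcancel e e 1 (by rw [(he e heI).1, mul_one])
      have hall : ∀ s : S, s ∈ I := by
        intro s
        have h := hId s e heI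
        rwa [he1, mul_one] at h
      refine ⟨?_, ?_⟩
      · exact Finite.of_injective (fun s : S => (⟨s, hall s⟩ : {x // x ∈ I}))
          (fun a b h => congrArg Subtype.val h)
      · intro s
        obtain ⟨y, hyI, h1, h2⟩ := hinv s (hall s)
        rw [he1] at h1 h2
        exact ⟨y, h1, h2⟩
    · rintro ⟨hfin, hgrp⟩
      haveI := Fintype.ofFinite S
      apply exists_invariant_of_ideal (I := (Finset.univ : Finset S))
      refine ⟨⟨1, Finset.mem_univ 1⟩, fun s x _ => Finset.mem_univ _, 1, Finset.mem_univ 1,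
        fun x _ => ⟨one_mul x, mul_one x⟩, fun x _ => ?_⟩
      obtain ⟨y, h1, h2⟩ := hgrp x
      exact ⟨y, Finset.mem_univ y, h1, h2⟩
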